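/- With the notation of the AND subprotocol: for all reals α, β, γ, δ > 0 with α + β + γ + δ = 1, the external information cost I_ext(ε) = H(P(ε)) − (α·H(R₀₀) + β·H(R₀₁) + γ·H(R₁₀) + δ·H(R₁₁)) satisfies lim_{ε→0⁺} I_ext(ε)/ε² = 128·(2αδ + β(1−β) + γ(1−γ))/ln 2. -/

import Mathlib

open Filter

/-- Entropy (base 2) of a six-entry nonnegative vector, with `0 * log₂ 0 = 0`
(automatic since `Real.logb 2 0 = 0`). -/
noncomputable def H6 (v : Fin 6 → ℝ) : ℝ := -∑ i, v i * Real.logb 2 (v i)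

/-- `p₊ = (1/2 + 4ε)²`. -/
noncomputable def pPlus (ε : ℝ) : ℝ := (1 / 2 + 4 * ε) ^ 2

/-- `p₋ = (1/2 − 4ε)²`. -/
noncomputable def pMinus (ε : ℝ) : ℝ := (1 / 2 - 4 * ε) ^ 2

/-- `q = (1/2 + 4ε)(1/2 − 4ε)`. -/
noncomputable def qMix (ε : ℝ) : ℝ := (1 / 2 + 4 * ε) * (1 / 2 - 4 * ε)

/-- Transcript distribution `P(ε) = (m₁₁, m₀₀, m₁₀/2, m₁₀/2, m₀₁/2, m₀₁/2)` of the
AND subprotocol on input distribution `(α, β, γ, δ)`, where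
`m₀₀ = α·p₊ + δ·p₋ + (β+γ)·q`, `m₀₁ = β·p₊ + γ·p₋ + (α+δ)·q`,
`m₁₀ = γ·p₊ + β·p₋ + (α+δ)·q`, `m₁₁ = δ·p₊ + α·p₋ + (β+γ)·q`. -/
noncomputable def Pvec (α β γ δ ε : ℝ) : Fin 6 → ℝ :=
  ![δ * pPlus ε + α * pMinus ε + (β + γ) * qMix ε,
    α * pPlus ε + δ * pMinus ε + (β + γ) * qMix ε,
    (γ * pPlus ε + β * pMinus ε + (α + δ) * qMix ε) / 2,
    (γ * pPlus ε + β * pMinus ε + (α + δ) * qMix ε) / 2,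
    (β * pPlus ε + γ * pMinus ε + (α + δ) * qMix ε) / 2,
    (β * pPlus ε + γ * pMinus ε + (α + δ) * qMix ε) / 2]

/-- Conditional transcript distribution given `XY = 11`. -/
noncomputable def R11 (ε : ℝ) : Fin 6 → ℝ :=
  ![pPlus ε, pMinus ε, qMix ε / 2, qMix ε / 2, qMix ε / 2, qMix ε / 2]

/-- Conditional transcript distribution given `XY = 00`. -/
noncomputable def R00 (ε : ℝ) : Fin 6 → ℝ :=
  ![pMinus ε, pPlus ε, qMix ε / 2, qMix ε / 2, qMix ε / 2, qMix ε / 2]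

/-- Conditional transcript distribution given `XY = 01`. -/
noncomputable def R01 (ε : ℝ) : Fin 6 → ℝ :=
  ![qMix ε, qMix ε, pMinus ε / 2, pMinus ε / 2, pPlus ε / 2, pPlus ε / 2]

/-- Conditional transcript distribution given `XY = 10`. -/
noncomputable def R10 (ε : ℝ) : Fin 6 → ℝ :=
  ![qMix ε, qMix ε, pPlus ε / 2, pPlus ε / 2, pMinus ε / 2, pMinus ε / 2]

/-- External information cost of the AND subprotocol:
`I_ext(ε) = H(P(ε)) − (α·H(R₀₀) + β·H(R₀₁) + γ·H(R₁₀) + δ·H(R₁₁))`. -/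
noncomputable def Iext (α β γ δ ε : ℝ) : ℝ :=
  H6 (Pvec α β γ δ ε) -
    (α * H6 (R00 ε) + β * H6 (R01 ε) + γ * H6 (R10 ε) + δ * H6 (R11 ε))


noncomputable def chi (t : ℝ) : ℝ := (1 + t) * Real.log (1 + t) - t

lemma log_one_add_div : Tendsto (fun t : ℝ => Real.log (1 + t) / t) (nhdsWithin 0 {(0:ℝ)}ᶜ) (nhds 1) := by
  have h : HasDerivAt (fun t : ℝ => Real.log (1 + t)) 1 0 := by
    have h1 : HasDerivAt (fun t : ℝ => 1 + t) 1 0 := (hasDerivAt_id 0).const_add 1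
    have h2 := (Real.hasDerivAt_log (by norm_num : (1:ℝ) + 0 ≠ 0)).comp 0 h1
    simpa [Function.comp_def] using h2
  have := hasDerivAt_iff_tendsto_slope.mp h
  refine this.congr (fun t => ?_)
  simp [slope_def_field, div_eq_div_iff]

lemma chi_div_sq : Tendsto (fun t : ℝ => chi t / t ^ 2) (nhdsWithin 0 {(0:ℝ)}ᶜ) (nhds (1/2)) := by
  have hev : ∀ᶠ t : ℝ in nhds 0, HasDerivAt chi (Real.log (1 + t)) t := by
    have : Set.Ioo (-(1:ℝ)/2) (1/2) ∈ nhds (0:ℝ) := Ioo_mem_nhds (by norm_num) (by norm_num)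
    filter_upwards [this] with t ht
    have h0 : (1:ℝ) + t ≠ 0 := by have := ht.1; have := ht.2; nlinarith [ht.1, ht.2]
    have h1 : HasDerivAt (fun s : ℝ => 1 + s) 1 t := (hasDerivAt_id t).const_add 1
    have h2 : HasDerivAt (fun s : ℝ => Real.log (1 + s)) (1/(1+t)) t := by
      simpa [Function.comp_def] using (Real.hasDerivAt_log h0).comp t h1
    have h3 := (h1.mul h2).sub (hasDerivAt_id t)
    have e : chi = ((fun s : ℝ => 1 + s) * fun s : ℝ => Real.log (1 + s)) - id := by
      funext s; simp [chi]
    rw [e]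
    exact h3.congr_deriv (by rw [mul_one_div_cancel h0]; ring)
  have hg : ∀ᶠ t : ℝ in nhds 0, HasDerivAt (fun s : ℝ => s ^ 2) (2 * t) t := by
    filter_upwards with t
    simpa using hasDerivAt_pow 2 t
  have hchi0 : Tendsto chi (nhds 0) (nhds 0) := by
    have hc : ContinuousAt chi 0 := by
      have : ContinuousAt (fun t : ℝ => Real.log (1 + t)) 0 :=
        (Real.continuousAt_log (by norm_num)).comp (by fun_prop)
      exact ((continuousAt_const.add continuousAt_id).mul this).sub continuousAt_id
    simpa [chi] using hc.tendsto
  have hdiv : Tendsto (fun t : ℝ => Real.log (1 + t) / (2 * t)) (nhdsWithin 0 {(0:ℝ)}ᶜ) (nhds (1/2)) := by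
    have := log_one_add_div.div_const 2
    refine this.congr' ?_ |>.mono_right (by norm_num)
    · filter_upwards with t
      ring
  refine HasDerivAt.lhopital_zero_nhdsNE (f' := fun t => Real.log (1 + t)) (g' := fun t => 2 * t)
    (eventually_nhdsWithin_of_eventually_nhds hev) (eventually_nhdsWithin_of_eventually_nhds hg)
    ?_ (tendsto_nhdsWithin_of_tendsto_nhds hchi0) ?_ hdiv
  · filter_upwards [self_mem_nhdsWithin] with t ht
    simpa using ht
  · refine tendsto_nhdsWithin_of_tendsto_nhds ?_
    have : Tendsto (fun t : ℝ => t ^ 2) (nhds 0) (nhds (0 ^ 2)) := (continuous_pow 2).tendsto 0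
    simpa using this

noncomputable def Gfun (t : ℝ) : ℝ := if t = 0 then (1/2 : ℝ) else chi t / t ^ 2

lemma chi_eq_G (t : ℝ) : chi t = Gfun t * t ^ 2 := by
  by_cases h : t = 0
  · subst h; simp [chi, Gfun]
  · simp [Gfun, h]

lemma G_tendsto : Tendsto Gfun (nhds 0) (nhds (1/2)) := by
  rw [← nhdsNE_sup_pure]
  refine tendsto_sup.mpr ⟨?_, ?_⟩
  · refine chi_div_sq.congr' ?_
    filter_upwards [self_mem_nhdsWithin] with t ht
    simp only [Set.mem_compl_iff, Set.mem_singleton_iff] at ht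
    simp [Gfun, ht]
  · have : Gfun 0 = 1/2 := by simp [Gfun]
    rw [← this]
    exact tendsto_pure_nhds Gfun 0

lemma chi_limit (c d : ℝ) :
    Tendsto (fun ε : ℝ => chi (c * ε + d * ε ^ 2) / ε ^ 2) (nhdsWithin 0 (Set.Ioi 0))
      (nhds (c ^ 2 / 2)) := by
  have harg : Tendsto (fun ε : ℝ => c * ε + d * ε ^ 2) (nhdsWithin 0 (Set.Ioi 0)) (nhds 0) := by
    refine Tendsto.mono_left ?_ nhdsWithin_le_nhds
    have : Continuous fun ε : ℝ => c * ε + d * ε ^ 2 := by fun_prop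
    simpa using this.tendsto 0
  have h1 : Tendsto (fun ε : ℝ => Gfun (c * ε + d * ε ^ 2)) (nhdsWithin 0 (Set.Ioi 0))
      (nhds (1/2)) := G_tendsto.comp harg
  have h2 : Tendsto (fun ε : ℝ => (c + d * ε) ^ 2) (nhdsWithin 0 (Set.Ioi 0)) (nhds (c ^ 2)) := by
    refine Tendsto.mono_left ?_ nhdsWithin_le_nhds
    have : Continuous fun ε : ℝ => (c + d * ε) ^ 2 := by fun_prop
    simpa using this.tendsto 0
  have := h1.mul h2
  rw [show (1:ℝ)/2 * c ^ 2 = c ^ 2 / 2 by ring] at this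
  refine this.congr' ?_
  filter_upwards [self_mem_nhdsWithin] with ε hε
  have hε0 : ε ≠ 0 := ne_of_gt hε
  rw [chi_eq_G]
  field_simp

lemma chi4 (x : ℝ) (hx : x ≠ 0) :
    chi (4 * x - 1) = 4 * x * (2 * Real.log 2 + Real.log x) - (4 * x - 1) := by
  unfold chi
  rw [show (1:ℝ) + (4 * x - 1) = 4 * x by ring, Real.log_mul (by norm_num) hx,
    show (4:ℝ) = 2 ^ 2 by norm_num, Real.log_pow]
  push_cast
  ring

lemma logb2_half (x : ℝ) (hx : x ≠ 0) :
    Real.logb 2 (x / 2) = (Real.log x - Real.log 2) / Real.log 2 := by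
  rw [Real.logb, Real.log_div hx (by norm_num)]

lemma logb2_eq (x : ℝ) : Real.logb 2 x = Real.log x / Real.log 2 := rfl

lemma H6_explicit (x0 x1 x2 x3 x4 x5 : ℝ) :
    H6 ![x0, x1, x2, x3, x4, x5] =
      -(x0 * Real.logb 2 x0 + x1 * Real.logb 2 x1 + x2 * Real.logb 2 x2
        + x3 * Real.logb 2 x3 + x4 * Real.logb 2 x4 + x5 * Real.logb 2 x5) := by
  have h5 : (5 : Fin 6) = (4 : Fin 5).succ := rfl
  simp [H6, Fin.sum_univ_six, h5, Matrix.cons_val_succ]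

lemma key (a b c d p r q : ℝ) (hp : p ≠ 0) (hr : r ≠ 0) (hq : q ≠ 0)
    (hm11 : d * p + a * r + (b + c) * q ≠ 0) (hm00 : a * p + d * r + (b + c) * q ≠ 0)
    (hm01 : b * p + c * r + (a + d) * q ≠ 0) (hm10 : c * p + b * r + (a + d) * q ≠ 0)
    (hsum : a + b + c + d = 1) (hpqr : p + r + 2 * q = 1) :
    H6 ![d * p + a * r + (b + c) * q, a * p + d * r + (b + c) * q,
        (c * p + b * r + (a + d) * q) / 2, (c * p + b * r + (a + d) * q) / 2,
        (b * p + c * r + (a + d) * q) / 2, (b * p + c * r + (a + d) * q) / 2]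
      - (a * H6 ![r, p, q / 2, q / 2, q / 2, q / 2]
        + b * H6 ![q, q, r / 2, r / 2, p / 2, p / 2]
        + c * H6 ![q, q, p / 2, p / 2, r / 2, r / 2]
        + d * H6 ![p, r, q / 2, q / 2, q / 2, q / 2])
    = (- chi (4 * (d * p + a * r + (b + c) * q) - 1)
       - chi (4 * (a * p + d * r + (b + c) * q) - 1)
       - chi (4 * (b * p + c * r + (a + d) * q) - 1)
       - chi (4 * (c * p + b * r + (a + d) * q) - 1)
       + chi (4 * p - 1) + chi (4 * r - 1) + 2 * chi (4 * q - 1)) / (4 * Real.log 2) := by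
  have hL : Real.log 2 ≠ 0 := ne_of_gt (Real.log_pos one_lt_two)
  have hd : d = 1 - a - b - c := by linarith
  subst hd
  have hq' : q = (1 - p - r) / 2 := by linarith
  subst hq'
  rw [H6_explicit, H6_explicit, H6_explicit, H6_explicit, H6_explicit,
    chi4 _ hm11, chi4 _ hm00, chi4 _ hm01, chi4 _ hm10, chi4 _ hp, chi4 _ hr, chi4 _ hq,
    logb2_half _ hm10, logb2_half _ hm01, logb2_half _ hq, logb2_half _ hr, logb2_half _ hp]
  simp only [logb2_eq]
  field_simp
  ring

theorem stmt_13 (α β γ δ : ℝ) (hα : 0 < α) (hβ : 0 < β) (hγ : 0 < γ) (hδ : 0 < δ)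
    (hsum : α + β + γ + δ = 1) :
    Tendsto (fun ε : ℝ => Iext α β γ δ ε / ε ^ 2) (nhdsWithin 0 (Set.Ioi 0))
      (nhds (128 * (2 * α * δ + β * (1 - β) + γ * (1 - γ)) / Real.log 2)) := by
  have hL : Real.log 2 ≠ 0 := ne_of_gt (Real.log_pos one_lt_two)
  have hd : δ = 1 - α - β - γ := by linarith
  subst hd
  have t1 := chi_limit (16 * (1 - 2 * α - β - γ)) (64 * (1 - 2 * β - 2 * γ))
  have t2 := chi_limit (16 * (2 * α + β + γ - 1)) (64 * (1 - 2 * β - 2 * γ))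
  have t3 := chi_limit (16 * (β - γ)) (64 * (2 * β + 2 * γ - 1))
  have t4 := chi_limit (16 * (γ - β)) (64 * (2 * β + 2 * γ - 1))
  have t5 := chi_limit 16 64
  have t6 := chi_limit (-16) 64
  have t7 := chi_limit 0 (-64)
  have T2 := ((((((t1.neg.sub t2).sub t3).sub t4).add t5).add t6).add
    (t7.const_mul 2)).div_const (4 * Real.log 2)
  have EV : (fun ε : ℝ =>
      (-(chi (16 * (1 - 2 * α - β - γ) * ε + 64 * (1 - 2 * β - 2 * γ) * ε ^ 2) / ε ^ 2)
        - chi (16 * (2 * α + β + γ - 1) * ε + 64 * (1 - 2 * β - 2 * γ) * ε ^ 2) / ε ^ 2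
        - chi (16 * (β - γ) * ε + 64 * (2 * β + 2 * γ - 1) * ε ^ 2) / ε ^ 2
        - chi (16 * (γ - β) * ε + 64 * (2 * β + 2 * γ - 1) * ε ^ 2) / ε ^ 2
        + chi (16 * ε + 64 * ε ^ 2) / ε ^ 2
        + chi (-16 * ε + 64 * ε ^ 2) / ε ^ 2
        + 2 * (chi (0 * ε + -64 * ε ^ 2) / ε ^ 2)) / (4 * Real.log 2))
      =ᶠ[nhdsWithin 0 (Set.Ioi 0)]
      (fun ε : ℝ => Iext α β γ (1 - α - β - γ) ε / ε ^ 2) := by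
    filter_upwards [Ioo_mem_nhdsGT_of_mem
      (by norm_num : (0:ℝ) ∈ Set.Ico (0:ℝ) (1/8))] with ε hε
    obtain ⟨hε0, hε8⟩ := hε
    have hbp : (0:ℝ) < 1 / 2 + 4 * ε := by linarith
    have hbm : (0:ℝ) < 1 / 2 - 4 * ε := by linarith
    have hp : 0 < pPlus ε := pow_pos hbp 2
    have hr : 0 < pMinus ε := pow_pos hbm 2
    have hq : 0 < qMix ε := mul_pos hbp hbm
    have hδ' : (0:ℝ) < 1 - α - β - γ := hδ
    have hm11 : 0 < (1 - α - β - γ) * pPlus ε + α * pMinus ε + (β + γ) * qMix ε :=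
      add_pos (add_pos (mul_pos hδ' hp) (mul_pos hα hr)) (mul_pos (add_pos hβ hγ) hq)
    have hm00 : 0 < α * pPlus ε + (1 - α - β - γ) * pMinus ε + (β + γ) * qMix ε :=
      add_pos (add_pos (mul_pos hα hp) (mul_pos hδ' hr)) (mul_pos (add_pos hβ hγ) hq)
    have hm01 : 0 < β * pPlus ε + γ * pMinus ε + (α + (1 - α - β - γ)) * qMix ε :=
      add_pos (add_pos (mul_pos hβ hp) (mul_pos hγ hr)) (mul_pos (add_pos hα hδ') hq)
    have hm10 : 0 < γ * pPlus ε + β * pMinus ε + (α + (1 - α - β - γ)) * qMix ε :=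
      add_pos (add_pos (mul_pos hγ hp) (mul_pos hβ hr)) (mul_pos (add_pos hα hδ') hq)
    have hkey := key α β γ (1 - α - β - γ) (pPlus ε) (pMinus ε) (qMix ε)
      hp.ne' hr.ne' hq.ne' hm11.ne' hm00.ne' hm01.ne' hm10.ne' (by ring)
      (by unfold pPlus pMinus qMix; ring)
    have hIe : Iext α β γ (1 - α - β - γ) ε =
        (- chi (4 * ((1 - α - β - γ) * pPlus ε + α * pMinus ε + (β + γ) * qMix ε) - 1)
         - chi (4 * (α * pPlus ε + (1 - α - β - γ) * pMinus ε + (β + γ) * qMix ε) - 1)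
         - chi (4 * (β * pPlus ε + γ * pMinus ε + (α + (1 - α - β - γ)) * qMix ε) - 1)
         - chi (4 * (γ * pPlus ε + β * pMinus ε + (α + (1 - α - β - γ)) * qMix ε) - 1)
         + chi (4 * pPlus ε - 1) + chi (4 * pMinus ε - 1) + 2 * chi (4 * qMix ε - 1))
          / (4 * Real.log 2) := by
      simp only [Iext, Pvec, R00, R01, R10, R11]
      exact hkey
    rw [hIe,
      show 4 * ((1 - α - β - γ) * pPlus ε + α * pMinus ε + (β + γ) * qMix ε) - 1
        = 16 * (1 - 2 * α - β - γ) * ε + 64 * (1 - 2 * β - 2 * γ) * ε ^ 2 by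
          unfold pPlus pMinus qMix; ring,
      show 4 * (α * pPlus ε + (1 - α - β - γ) * pMinus ε + (β + γ) * qMix ε) - 1
        = 16 * (2 * α + β + γ - 1) * ε + 64 * (1 - 2 * β - 2 * γ) * ε ^ 2 by
          unfold pPlus pMinus qMix; ring,
      show 4 * (β * pPlus ε + γ * pMinus ε + (α + (1 - α - β - γ)) * qMix ε) - 1
        = 16 * (β - γ) * ε + 64 * (2 * β + 2 * γ - 1) * ε ^ 2 by
          unfold pPlus pMinus qMix; ring,
      show 4 * (γ * pPlus ε + β * pMinus ε + (α + (1 - α - β - γ)) * qMix ε) - 1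
        = 16 * (γ - β) * ε + 64 * (2 * β + 2 * γ - 1) * ε ^ 2 by
          unfold pPlus pMinus qMix; ring,
      show 4 * pPlus ε - 1 = 16 * ε + 64 * ε ^ 2 by unfold pPlus; ring,
      show 4 * pMinus ε - 1 = -16 * ε + 64 * ε ^ 2 by unfold pMinus; ring,
      show 4 * qMix ε - 1 = 0 * ε + -64 * ε ^ 2 by unfold qMix; ring]
    ring
  have T3 := Tendsto.congr' EV T2
  convert T3 using 2
  field_simp
  ring
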